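/- For a compact gluing cubespace X and any s ≥ 0, the quotient X/∼_s by the s-th canonical relation has (s+1)-uniqueness. Consequently, if X is a compact fibrant cubespace then X/∼_s is an s-nilspace. -/

import Mathlib

open Function Set

/-- The all-ones vertex `1⃗` of the discrete cube `{0,1}^k`. -/
def topVtx (k : ℕ) : Fin k → Bool := fun _ => true

/-- A family of cube sets on a space `X`: for each `k`, a set of `k`-configurations. -/
structure CubeFamily (X : Type*) where
  cubes : ∀ k : ℕ, Set ((Fin k → Bool) → X)

/-- A morphism of discrete cubes: each coordinate function is constantly `0`,
constantly `1`, a coordinate `ω i`, or a negated coordinate `!ω i`. -/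
def IsDiscreteCubeMorphism {k l : ℕ} (ρ : (Fin k → Bool) → (Fin l → Bool)) : Prop :=
  ∀ j : Fin l, (∀ ω, ρ ω j = false) ∨ (∀ ω, ρ ω j = true) ∨
    (∃ i : Fin k, ∀ ω, ρ ω j = ω i) ∨ (∃ i : Fin k, ∀ ω, ρ ω j = !(ω i))

/-- The cubespace axioms: cube sets are closed, `C^0(X) = X`, and cubes are stable
under precomposition with morphisms of discrete cubes. -/
def CubeFamily.IsCubespace {X : Type*} [TopologicalSpace X] (S : CubeFamily X) : Prop :=
  (∀ k, IsClosed (S.cubes k)) ∧ S.cubes 0 = Set.univ ∧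
    ∀ {k l : ℕ} (ρ : (Fin k → Bool) → (Fin l → Bool)), IsDiscreteCubeMorphism ρ →
      ∀ c ∈ S.cubes l, (fun ω => c (ρ ω)) ∈ S.cubes k

/-- A cubespace morphism: a continuous map sending cubes to cubes. -/
def IsMorphism {X Y : Type*} [TopologicalSpace X] [TopologicalSpace Y]
    (S : CubeFamily X) (T : CubeFamily Y) (f : X → Y) : Prop :=
  Continuous f ∧ ∀ k, ∀ c ∈ S.cubes k, (fun ω => f (c ω)) ∈ T.cubes k

/-- `lam` is a `k`-corner: each lower face `{ω : ω i = 0}` restricts to a `(k-1)`-cube.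
(The restriction of `lam` to the face `{ω : ω i = 0}` is a `(k-1)`-cube iff the
degenerate configuration `ω ↦ lam (update ω i false)` is a `k`-cube, by the
discrete-cube-morphism axiom; the value of `lam` at `topVtx k` is irrelevant here.) -/
def IsCubeCorner {X : Type*} (S : CubeFamily X) {k : ℕ} (lam : (Fin k → Bool) → X) : Prop :=
  ∀ i : Fin k, (fun ω => lam (Function.update ω i false)) ∈ S.cubes k

/-- Relative `k`-completion for `f : X → Y`: every `k`-corner in `X` whose `f`-image
extends to a `k`-cube `c` of `Y` can be completed to a `k`-cube of `X` lying over `c`. -/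
def HasCompletionAt {X Y : Type*} (S : CubeFamily X) (T : CubeFamily Y) (f : X → Y)
    (k : ℕ) : Prop :=
  ∀ (lam : (Fin k → Bool) → X) (c : (Fin k → Bool) → Y), IsCubeCorner S lam → c ∈ T.cubes k →
    (∀ ω, ω ≠ topVtx k → f (lam ω) = c ω) →
    ∃ c₀ ∈ S.cubes k, (∀ ω, ω ≠ topVtx k → c₀ ω = lam ω) ∧ (fun ω => f (c₀ ω)) = c

/-- A fibration: a cubespace morphism with `k`-completion for all `k ≥ 0`. -/
def IsFibration {X Y : Type*} [TopologicalSpace X] [TopologicalSpace Y]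
    (S : CubeFamily X) (T : CubeFamily Y) (f : X → Y) : Prop :=
  IsMorphism S T f ∧ ∀ k, HasCompletionAt S T f k

/-- Relative `k`-uniqueness: two `k`-cubes agreeing off the top vertex with equal
`f`-images are equal. -/
def HasUniquenessAt {X Y : Type*} (S : CubeFamily X) (T : CubeFamily Y) (f : X → Y)
    (k : ℕ) : Prop :=
  ∀ c ∈ S.cubes k, ∀ c' ∈ S.cubes k, (∀ ω, ω ≠ topVtx k → c ω = c' ω) →
    (fun ω => f (c ω)) = (fun ω => f (c' ω)) → c = c'

/-- An `s`-fibration: a fibration with `(s+1)`-uniqueness. -/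
def IsSFibration {X Y : Type*} [TopologicalSpace X] [TopologicalSpace Y]
    (S : CubeFamily X) (T : CubeFamily Y) (f : X → Y) (s : ℕ) : Prop :=
  IsFibration S T f ∧ HasUniquenessAt S T f (s + 1)

/-- Absolute fibrancy: every `k`-corner completes to a `k`-cube. -/
def IsFibrant {X : Type*} (S : CubeFamily X) : Prop :=
  ∀ (k : ℕ) (lam : (Fin k → Bool) → X), IsCubeCorner S lam →
    ∃ c₀ ∈ S.cubes k, ∀ ω, ω ≠ topVtx k → c₀ ω = lam ω

/-- Absolute `k`-uniqueness. -/
def HasUnique {X : Type*} (S : CubeFamily X) (k : ℕ) : Prop :=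
  ∀ c ∈ S.cubes k, ∀ c' ∈ S.cubes k, (∀ ω, ω ≠ topVtx k → c ω = c' ω) → c = c'

/-- Ergodicity: every pair of points is a `1`-cube. -/
def IsErgodic {X : Type*} (S : CubeFamily X) : Prop := S.cubes 1 = Set.univ

/-- Concatenation `[c₁, c₂]` of two `k`-configurations along the last coordinate. -/
def concatCube {X : Type*} {k : ℕ} (c₁ c₂ : (Fin k → Bool) → X) :
    (Fin (k + 1) → Bool) → X :=
  fun ω => if ω (Fin.last k) = true then c₂ (fun i => ω i.castSucc)
           else c₁ (fun i => ω i.castSucc)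

/-- The gluing property. -/
def IsGluing {X : Type*} (S : CubeFamily X) : Prop :=
  ∀ (k : ℕ) (c₁ c₂ c₃ : (Fin k → Bool) → X), c₁ ∈ S.cubes k → c₂ ∈ S.cubes k →
    c₃ ∈ S.cubes k → concatCube c₁ c₂ ∈ S.cubes (k + 1) →
    concatCube c₂ c₃ ∈ S.cubes (k + 1) → concatCube c₁ c₃ ∈ S.cubes (k + 1)

/-- The `s`-th canonical relation `x ∼ₛ x'`. -/
def CanonRel {X : Type*} (S : CubeFamily X) (s : ℕ) (x x' : X) : Prop :=
  ∃ c ∈ S.cubes (s + 1), ∃ c' ∈ S.cubes (s + 1),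
    (∀ ω, ω ≠ topVtx (s + 1) → c ω = c' ω) ∧ c (topVtx (s + 1)) = x ∧ c' (topVtx (s + 1)) = x'

/-- The `s`-th canonical relation relative to `f` : `x ∼_{f,s} x'`. -/
def RelCanonRel {X Y : Type*} (S : CubeFamily X) (f : X → Y) (s : ℕ) (x x' : X) : Prop :=
  CanonRel S s x x' ∧ f x = f x'

/-- The quotient cubespace `X/∼ₛ`: cubes are images of cubes of `X` under the quotient map. -/
def quotFamilyAbs {X : Type*} (S : CubeFamily X) (s : ℕ) :
    CubeFamily (Quot (CanonRel S s)) :=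
  ⟨fun k => {d | ∃ c ∈ S.cubes k, d = fun ω => Quot.mk _ (c ω)}⟩


/-! ### Auxiliary machinery -/

namespace NilAux

variable {X Y : Type*}

/-- Generalized reindexing datum: each output coordinate is either an input coordinate
(possibly negated) or a constant. -/
def amap {k l : ℕ} (σ : Fin l → (Fin k × Bool) ⊕ Bool) (ω : Fin k → Bool) : Fin l → Bool :=
  fun j => match σ j with
  | .inl (i, b) => if b then ω i else !(ω i)
  | .inr b => b

lemma amap_morphism {k l : ℕ} (σ : Fin l → (Fin k × Bool) ⊕ Bool) :
    IsDiscreteCubeMorphism (amap σ) := by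
  intro j
  rcases h : σ j with ⟨i, b⟩ | b
  · cases b
    · right; right; right; exact ⟨i, fun ω => by simp [amap, h]⟩
    · right; right; left; exact ⟨i, fun ω => by simp [amap, h]⟩
  · cases b
    · left; intro ω; simp [amap, h]
    · right; left; intro ω; simp [amap, h]

variable {S : CubeFamily X}

/-- Closure of the cube family under discrete-cube morphisms. -/
def Mor (S : CubeFamily X) : Prop :=
  ∀ {k l : ℕ} (ρ : (Fin k → Bool) → (Fin l → Bool)), IsDiscreteCubeMorphism ρ →
      ∀ c ∈ S.cubes l, (fun ω => c (ρ ω)) ∈ S.cubes k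

lemma mem_amap (hmor : Mor S) {k l : ℕ} (σ : Fin l → (Fin k × Bool) ⊕ Bool)
    {c : (Fin l → Bool) → X} (hc : c ∈ S.cubes l) :
    (fun ω => c (amap σ ω)) ∈ S.cubes k :=
  hmor _ (amap_morphism σ) c hc

lemma mem_of_eq_amap (hmor : Mor S) {k l : ℕ} (σ : Fin l → (Fin k × Bool) ⊕ Bool)
    {c : (Fin l → Bool) → X} (hc : c ∈ S.cubes l) {f : (Fin k → Bool) → X}
    (h : ∀ ω, f ω = c (amap σ ω)) : f ∈ S.cubes k := by
  have : f = fun ω => c (amap σ ω) := funext h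
  rw [this]; exact mem_amap hmor σ hc

lemma const_mem (hmor : Mor S) (h0 : S.cubes 0 = Set.univ) (k : ℕ) (x : X) :
    (fun _ : Fin k → Bool => x) ∈ S.cubes k := by
  have h : (fun _ : Fin 0 → Bool => x) ∈ S.cubes 0 := by rw [h0]; trivial
  exact mem_of_eq_amap hmor (fun j => j.elim0) h (fun ω => rfl)

/-! ### snoc lemmas -/

lemma snoc_top (k : ℕ) : (Fin.snoc (topVtx k) true : Fin (k+1) → Bool) = topVtx (k+1) := by
  funext j
  induction j using Fin.lastCases with
  | last => simp [topVtx]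
  | cast i => simp [topVtx]

lemma snoc_false_ne_top {k : ℕ} (ω : Fin k → Bool) :
    (Fin.snoc ω false : Fin (k+1) → Bool) ≠ topVtx (k+1) := by
  intro h
  have := congrFun h (Fin.last k)
  simp [topVtx] at this

lemma snoc_true_top_iff {k : ℕ} (ω : Fin k → Bool) :
    (Fin.snoc ω true : Fin (k+1) → Bool) = topVtx (k+1) ↔ ω = topVtx k := by
  constructor
  · intro h; funext i
    have := congrFun h i.castSucc
    simpa [topVtx] using this
  · rintro rfl; exact snoc_top k

/-! ### top/bottom faces -/

/-- Bottom face of a `(k+1)`-configuration. -/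
def botC {α : Type*} {k : ℕ} (c : (Fin (k+1) → Bool) → α) : (Fin k → Bool) → α :=
  fun ω => c (Fin.snoc ω false)

/-- Top face of a `(k+1)`-configuration. -/
def topC {α : Type*} {k : ℕ} (c : (Fin (k+1) → Bool) → α) : (Fin k → Bool) → α :=
  fun ω => c (Fin.snoc ω true)

lemma face_eq_amap {k : ℕ} (b : Bool) (ω : Fin k → Bool) :
    amap (Fin.lastCases (Sum.inr b) (fun i => Sum.inl (i, true))) ω = Fin.snoc ω b := by
  funext j
  induction j using Fin.lastCases with
  | last => simp [amap]
  | cast i => simp [amap]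

lemma botC_mem (hmor : Mor S) {k : ℕ} {c : (Fin (k+1) → Bool) → X}
    (hc : c ∈ S.cubes (k+1)) : botC c ∈ S.cubes k :=
  mem_of_eq_amap hmor _ hc (fun ω => by rw [botC, ← face_eq_amap false ω])

lemma topC_mem (hmor : Mor S) {k : ℕ} {c : (Fin (k+1) → Bool) → X}
    (hc : c ∈ S.cubes (k+1)) : topC c ∈ S.cubes k :=
  mem_of_eq_amap hmor _ hc (fun ω => by rw [topC, ← face_eq_amap true ω])

lemma concat_pos {α : Type*} {k : ℕ} {c₁ c₂ : (Fin k → Bool) → α} {ω : Fin (k+1) → Bool}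
    (h : ω (Fin.last k) = true) : concatCube c₁ c₂ ω = c₂ (fun i => ω i.castSucc) :=
  if_pos h

lemma concat_neg {α : Type*} {k : ℕ} {c₁ c₂ : (Fin k → Bool) → α} {ω : Fin (k+1) → Bool}
    (h : ω (Fin.last k) = false) : concatCube c₁ c₂ ω = c₁ (fun i => ω i.castSucc) :=
  if_neg (by simp [h])

lemma concat_botC_topC {α : Type*} {k : ℕ} (c : (Fin (k+1) → Bool) → α) :
    concatCube (botC c) (topC c) = c := by
  funext ω
  have hω : (Fin.snoc (fun i => ω i.castSucc) (ω (Fin.last k)) : Fin (k+1) → Bool) = ω :=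
    Fin.snoc_init_self ω
  cases h : ω (Fin.last k)
  · rw [concat_neg h, botC, ← h, hω]
  · rw [concat_pos h, topC, ← h, hω]

/-- `[c,c]` is a cube. -/
lemma concat_self_mem (hmor : Mor S) {k : ℕ} {c : (Fin k → Bool) → X}
    (hc : c ∈ S.cubes k) : concatCube c c ∈ S.cubes (k+1) := by
  apply mem_of_eq_amap hmor (fun i : Fin k => Sum.inl (i.castSucc, true)) hc
  intro ω
  rcases h : ω (Fin.last k) with _ | _
  · rw [concat_neg h]; rfl
  · rw [concat_pos h]; rfl

/-- Reflection in the last coordinate. -/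
lemma concat_swap_mem (hmor : Mor S) {k : ℕ} {c₁ c₂ : (Fin k → Bool) → X}
    (hc : concatCube c₁ c₂ ∈ S.cubes (k+1)) : concatCube c₂ c₁ ∈ S.cubes (k+1) := by
  apply mem_of_eq_amap hmor
    (Fin.lastCases (Sum.inl (Fin.last k, false)) (fun i => Sum.inl (i.castSucc, true))) hc
  intro ω
  have harg : ∀ i : Fin k,
      amap (Fin.lastCases (Sum.inl (Fin.last k, false))
        (fun i => Sum.inl (i.castSucc, true))) ω i.castSucc = ω i.castSucc := by
    intro i; simp [amap]
  have hlast : amap (Fin.lastCases (Sum.inl (Fin.last k, false))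
      (fun i => Sum.inl (i.castSucc, true))) ω (Fin.last k) = !(ω (Fin.last k)) := by
    simp [amap]
  rcases h : ω (Fin.last k) with _ | _
  · rw [concat_neg h, concat_pos (by rw [hlast, h]; rfl)]
    exact congrArg c₂ (funext fun i => (harg i).symm)
  · rw [concat_pos h, concat_neg (by rw [hlast, h]; rfl)]
    exact congrArg c₁ (funext fun i => (harg i).symm)

end NilAux

namespace NilAux

variable {X : Type*} {S : CubeFamily X}

/-- `n`-fold degenerate extension. -/
def degN {α : Type*} {k : ℕ} : (n : ℕ) → ((Fin k → Bool) → α) → (Fin (k+n) → Bool) → α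
  | 0, d => d
  | n+1, d => concatCube (degN n d) (degN n d)

/-- `TN n d e`: equals `e` on the sub-top-face where the last `n` coordinates are all `1`,
and `d` elsewhere (composed with projection to the first `k` coordinates). -/
def TN {α : Type*} {k : ℕ} : (n : ℕ) → ((Fin k → Bool) → α) → ((Fin k → Bool) → α) →
    (Fin (k+n) → Bool) → α
  | 0, _, e => e
  | n+1, d, e => concatCube (degN n d) (TN n d e)

lemma degN_mem (hmor : Mor S) {k : ℕ} {d : (Fin k → Bool) → X} (hd : d ∈ S.cubes k) :
    ∀ n, degN n d ∈ S.cubes (k+n)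
  | 0 => hd
  | n+1 => concat_self_mem hmor (degN_mem hmor hd n)

lemma degN_apply {α : Type*} {k : ℕ} (d : (Fin k → Bool) → α) :
    ∀ (n : ℕ) (ω : Fin (k+n) → Bool), degN n d ω = d (fun i => ω (Fin.castAdd n i))
  | 0, ω => congrArg d (funext fun i => congrArg ω (Fin.ext rfl))
  | n+1, ω => by
    have h1 : degN (n+1) d ω = degN n d (fun i => ω i.castSucc) := by
      rcases h : ω (Fin.last (k+n)) with _ | _
      · exact concat_neg h
      · exact concat_pos h
    rw [h1, degN_apply d n]
    exact congrArg d (funext fun i => congrArg ω (Fin.ext rfl))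

lemma TN_apply_pos {α : Type*} {k : ℕ} (d e : (Fin k → Bool) → α) :
    ∀ (n : ℕ) (ω : Fin (k+n) → Bool), (∀ t : Fin n, ω (Fin.natAdd k t) = true) →
      TN n d e ω = e (fun i => ω (Fin.castAdd n i))
  | 0, ω, _ => congrArg e (funext fun i => congrArg ω (Fin.ext rfl))
  | n+1, ω, h => by
    have hlast : ω (Fin.last (k+n)) = true := by
      have := h (Fin.last n); rwa [show Fin.natAdd k (Fin.last n) = Fin.last (k+n) from
        Fin.ext rfl] at this
    rw [show TN (n+1) d e ω = TN n d e (fun i => ω i.castSucc) from concat_pos hlast]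
    rw [TN_apply_pos d e n _ (fun t => by
      have := h t.castSucc
      rwa [show Fin.natAdd k t.castSucc = (Fin.natAdd k t).castSucc from Fin.ext rfl] at this)]
    exact congrArg e (funext fun i => congrArg ω (Fin.ext rfl))

lemma TN_apply_neg {α : Type*} {k : ℕ} (d e : (Fin k → Bool) → α) :
    ∀ (n : ℕ) (ω : Fin (k+n) → Bool), (¬ ∀ t : Fin n, ω (Fin.natAdd k t) = true) →
      TN n d e ω = d (fun i => ω (Fin.castAdd n i))
  | 0, ω, h => absurd (fun t => t.elim0) h
  | n+1, ω, h => by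
    rcases hlast : ω (Fin.last (k+n)) with _ | _
    · rw [show TN (n+1) d e ω = degN n d (fun i => ω i.castSucc) from concat_neg hlast,
        degN_apply]
      exact congrArg d (funext fun i => congrArg ω (Fin.ext rfl))
    · rw [show TN (n+1) d e ω = TN n d e (fun i => ω i.castSucc) from concat_pos hlast]
      rw [TN_apply_neg d e n _ (fun hall => h (fun t => by
        induction t using Fin.lastCases with
        | last => rwa [show Fin.natAdd k (Fin.last n) = Fin.last (k+n) from Fin.ext rfl]
        | cast t =>
          have := hall t
          rwa [show ((Fin.natAdd k t).castSucc : Fin (k+n+1)) = Fin.natAdd k t.castSucc from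
            Fin.ext rfl] at this))]
      exact congrArg d (funext fun i => congrArg ω (Fin.ext rfl))

/-- `[degN n d, degN n e]` is a cube whenever `[d,e]` is. -/
lemma concat_degN_mem (hmor : Mor S) {k : ℕ} {d e : (Fin k → Bool) → X}
    (h : concatCube d e ∈ S.cubes (k+1)) :
    ∀ n, concatCube (degN n d) (degN n e) ∈ S.cubes (k+n+1) := by
  intro n
  apply mem_of_eq_amap hmor
    (fun j : Fin (k+1) => Sum.inl ((if h : (j : ℕ) < k then ⟨j, by omega⟩
      else ⟨k+n, by omega⟩ : Fin (k+n+1)), true)) h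
  intro ω
  set σ : Fin (k+1) → (Fin (k+n+1) × Bool) ⊕ Bool := fun j => Sum.inl ((if h : (j : ℕ) < k
    then ⟨j, by omega⟩ else ⟨k+n, by omega⟩ : Fin (k+n+1)), true) with hσ
  have hlast : amap σ ω (Fin.last k) = ω (Fin.last (k+n)) := by
    simp only [amap, hσ]
    rw [dif_neg (by rw [Fin.val_last]; omega)]
    try exact congrArg ω (Fin.ext rfl)
  have harg : ∀ i : Fin k, amap σ ω i.castSucc = ω (Fin.castAdd n i).castSucc := by
    intro i
    simp only [amap, hσ]
    rw [dif_pos (show ((i.castSucc : Fin (k+1)) : ℕ) < k from i.isLt)]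
    try exact congrArg ω (Fin.ext rfl)
  rcases hl : ω (Fin.last (k+n)) with _ | _
  · rw [concat_neg hl, concat_neg (by rw [hlast, hl]), degN_apply]
    exact congrArg d (funext fun i => by rw [harg i]; try exact congrArg ω (Fin.ext rfl))
  · rw [concat_pos hl, concat_pos (by rw [hlast, hl]), degN_apply]
    exact congrArg e (funext fun i => by rw [harg i]; try exact congrArg ω (Fin.ext rfl))

end NilAux

namespace NilAux

variable {X : Type*} {S : CubeFamily X}

/-- Permutation moving the coordinate in position `k` (of `k+1+n`) to the last position. -/
def tau (k n : ℕ) (j : Fin (k+1+n)) : Fin (k+n+1) :=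
  if _ : (j : ℕ) < k then ⟨j, by omega⟩
  else if _ : (j : ℕ) = k then ⟨k+n, by omega⟩
  else ⟨(j : ℕ) - 1, by have := j.isLt; omega⟩

/-- Inverse of `tau`. -/
def tau' (k n : ℕ) (j : Fin (k+n+1)) : Fin (k+1+n) :=
  if _ : (j : ℕ) < k then ⟨j, by omega⟩
  else if _ : (j : ℕ) = k+n then ⟨k, by omega⟩
  else ⟨(j : ℕ) + 1, by have := j.isLt; omega⟩

lemma tau_val (k n : ℕ) (j : Fin (k+1+n)) :
    ((tau k n j : Fin (k+n+1)) : ℕ) =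
      if (j : ℕ) < k then (j : ℕ) else if (j : ℕ) = k then k+n else (j : ℕ) - 1 := by
  unfold tau; split_ifs <;> rfl

lemma tau'_val (k n : ℕ) (j : Fin (k+n+1)) :
    ((tau' k n j : Fin (k+1+n)) : ℕ) =
      if (j : ℕ) < k then (j : ℕ) else if (j : ℕ) = k+n then k else (j : ℕ) + 1 := by
  unfold tau'; split_ifs <;> rfl

lemma tau_tau' (k n : ℕ) (j : Fin (k+n+1)) : tau k n (tau' k n j) = j := by
  have hj := j.isLt
  apply Fin.ext
  rw [tau_val, tau'_val]
  split_ifs <;> omega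

lemma tau'_tau (k n : ℕ) (j : Fin (k+1+n)) : tau' k n (tau k n j) = j := by
  have hj := j.isLt
  apply Fin.ext
  rw [tau'_val, tau_val]
  split_ifs <;> omega

/-- The key coordinate identity relating `TN` applied to concatenations with the
concatenation of a degenerate configuration and `TN`. -/
lemma key_eq {α : Type*} {k : ℕ} (d₀ d₁ d₁' : (Fin k → Bool) → α) (n : ℕ)
    (ω : Fin (k+1+n) → Bool) :
    TN n (concatCube d₀ d₁) (concatCube d₀ d₁') ω =
      concatCube (degN n d₀) (TN n d₁ d₁') (fun j => ω (tau' k n j)) := by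
  set ω' : Fin (k+n+1) → Bool := fun j => ω (tau' k n j) with hω'
  have hkv : k < k+1+n := by omega
  have hA : ω' (Fin.last (k+n)) = ω ⟨k, hkv⟩ := by
    apply congrArg ω
    apply Fin.ext
    rw [tau'_val]
    simp
  have hcoord : ∀ t : Fin n, ω' ((Fin.natAdd k t).castSucc) = ω (Fin.natAdd (k+1) t) := by
    intro t
    apply congrArg ω
    apply Fin.ext
    have ht := t.isLt
    rw [tau'_val]
    have hv : (((Fin.natAdd k t).castSucc : Fin (k+n+1)) : ℕ) = k + (t : ℕ) := rfl
    rw [hv]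
    have hv2 : ((Fin.natAdd (k+1) t : Fin (k+1+n)) : ℕ) = k + 1 + (t : ℕ) := rfl
    rw [hv2]
    split_ifs <;> omega
  have hargR : ∀ i : Fin k, ω' ((Fin.castAdd n i).castSucc) = ω ⟨(i : ℕ), by omega⟩ := by
    intro i
    apply congrArg ω
    apply Fin.ext
    rw [tau'_val]
    have hv : (((Fin.castAdd n i).castSucc : Fin (k+n+1)) : ℕ) = (i : ℕ) := rfl
    rw [hv, if_pos i.isLt]
  have hargL : ∀ i : Fin k,
      ω (Fin.castAdd n (i.castSucc)) = ω ⟨(i : ℕ), by omega⟩ := fun i => rfl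
  by_cases hC : ∀ t : Fin n, ω (Fin.natAdd (k+1) t) = true
  · rw [TN_apply_pos _ _ _ _ hC]
    rcases hAv : ω ⟨k, hkv⟩ with _ | _
    · rw [concat_neg (show ω (Fin.castAdd n (Fin.last k)) = false from hAv),
        concat_neg (by rw [hA]; exact hAv), degN_apply]
      exact congrArg d₀ (funext fun i => by rw [hargL i, hargR i])
    · rw [concat_pos (show ω (Fin.castAdd n (Fin.last k)) = true from hAv),
        concat_pos (by rw [hA]; exact hAv),
        TN_apply_pos _ _ n _ (fun t => (hcoord t).trans (hC t))]
      exact congrArg d₁' (funext fun i => by rw [hargL i, hargR i])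
  · rw [TN_apply_neg _ _ _ _ hC]
    rcases hAv : ω ⟨k, hkv⟩ with _ | _
    · rw [concat_neg (show ω (Fin.castAdd n (Fin.last k)) = false from hAv),
        concat_neg (by rw [hA]; exact hAv), degN_apply]
      exact congrArg d₀ (funext fun i => by rw [hargL i, hargR i])
    · rw [concat_pos (show ω (Fin.castAdd n (Fin.last k)) = true from hAv),
        concat_pos (by rw [hA]; exact hAv),
        TN_apply_neg _ _ n _ (fun hall => hC (fun t => (hcoord t).symm.trans (hall t)))]
      exact congrArg d₁ (funext fun i => by rw [hargL i, hargR i])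

/-- Transport membership: from `TN` form to concatenation form. -/
lemma T3 (hmor : Mor S) {k : ℕ} (d₀ d₁ d₁' : (Fin k → Bool) → X) (n : ℕ)
    (h : TN n (concatCube d₀ d₁) (concatCube d₀ d₁') ∈ S.cubes (k+1+n)) :
    concatCube (degN n d₀) (TN n d₁ d₁') ∈ S.cubes (k+n+1) := by
  apply mem_of_eq_amap hmor (fun j : Fin (k+1+n) => Sum.inl (tau k n j, true)) h
  intro ω
  have : (fun j => amap (fun j : Fin (k+1+n) => Sum.inl (tau k n j, true)) ω (tau' k n j))
      = ω := by
    funext j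
    show ω (tau k n (tau' k n j)) = ω j
    rw [tau_tau']
  rw [key_eq d₀ d₁ d₁', this]

/-- Transport membership: from concatenation form to `TN` form. -/
lemma T4 (hmor : Mor S) {k : ℕ} (d₀ d₁ d₁' : (Fin k → Bool) → X) (n : ℕ)
    (h : concatCube (degN n d₀) (TN n d₁ d₁') ∈ S.cubes (k+n+1)) :
    TN n (concatCube d₀ d₁) (concatCube d₀ d₁') ∈ S.cubes (k+1+n) := by
  apply mem_of_eq_amap hmor (fun j : Fin (k+n+1) => Sum.inl (tau' k n j, true)) h
  intro ω
  exact key_eq d₀ d₁ d₁' n ω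

end NilAux

namespace NilAux

variable {X : Type*} {S : CubeFamily X}

lemma claimB (hmor : Mor S) (hglue : IsGluing S) :
    ∀ (k : ℕ) (c a a' : (Fin k → Bool) → X), c ∈ S.cubes k → a ∈ S.cubes k → a' ∈ S.cubes k →
    (∀ ω, ω ≠ topVtx k → a ω = a' ω) → a (topVtx k) = c (topVtx k) →
    ((fun ω => if ω = topVtx k then a' (topVtx k) else c ω) ∈ S.cubes k ∧
     ∀ n, (∀ m, 1 ≤ m → m ≤ n → TN m a a' ∈ S.cubes (k + m)) →
      TN n c (fun ω => if ω = topVtx k then a' (topVtx k) else c ω) ∈ S.cubes (k + n)) := by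
  intro k
  induction k with
  | zero =>
    intro c a a' hc ha ha' hagr htop
    have hsing : ∀ ω : Fin 0 → Bool, ω = topVtx 0 := fun ω => funext fun i => i.elim0
    have hca : c = a := funext fun ω => by rw [hsing ω]; exact htop.symm
    have hc'a' : (fun ω => if ω = topVtx 0 then a' (topVtx 0) else c ω) = a' := by
      funext ω; rw [if_pos (hsing ω)]; exact (congrArg a' (hsing ω)).symm
    constructor
    · rw [hc'a']; exact ha'
    · intro n htower
      rcases Nat.eq_zero_or_pos n with rfl | hpos
      · rw [hc'a']; exact ha'
      · rw [hc'a', hca]; exact htower n hpos (le_refl n)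
  | succ k IH =>
    intro c a a' hc ha ha' hagr htop
    have hbots : botC a = botC a' := funext fun ω => hagr _ (snoc_false_ne_top ω)
    have htopagr : ∀ ω, ω ≠ topVtx k → topC a ω = topC a' ω :=
      fun ω h => hagr _ (fun hcon => h ((snoc_true_top_iff ω).mp hcon))
    have htoptop : topC a (topVtx k) = topC c (topVtx k) := by
      show a _ = c _
      rw [snoc_top k]; exact htop
    have ha_concat : concatCube (botC a) (topC a) ∈ S.cubes (k+1) := by
      rw [concat_botC_topC a]; exact ha
    have hca' : concatCube (botC a) (topC a') = a' := by
      rw [hbots]; exact concat_botC_topC a'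
    obtain ⟨hc'T, hTc⟩ := IH (topC c) (topC a) (topC a') (topC_mem hmor hc)
      (topC_mem hmor ha) (topC_mem hmor ha') htopagr htoptop
    set c'T : (Fin k → Bool) → X :=
      fun ω => if ω = topVtx k then topC a' (topVtx k) else topC c ω with hc'Tdef
    have hID : (fun ω => if ω = topVtx (k+1) then a' (topVtx (k+1)) else c ω)
        = concatCube (botC c) c'T := by
      funext ω
      have hsn : (Fin.snoc (fun i => ω i.castSucc) (ω (Fin.last k)) : Fin (k+1) → Bool) = ω :=
        Fin.snoc_init_self ω
      rcases h : ω (Fin.last k) with _ | _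
      · rw [concat_neg h, if_neg (fun hh => by rw [hh] at h; simp [topVtx] at h)]
        show c ω = c (Fin.snoc (fun i => ω i.castSucc) false)
        apply congrArg c
        rw [← h]; exact hsn.symm
      · rw [concat_pos h]
        by_cases htopω : ω = topVtx (k+1)
        · rw [if_pos htopω]
          have harg : (fun i => ω i.castSucc) = topVtx k := by
            rw [htopω]; funext i; rfl
          rw [harg]
          simp only [hc'Tdef]
          simp only [if_true]
          exact (congrArg a' (snoc_top k)).symm
        · rw [if_neg htopω]
          have harg : (fun i => ω i.castSucc) ≠ topVtx k := by
            intro hh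
            apply htopω
            rw [← hsn, hh, h]
            exact snoc_top k
          simp only [hc'Tdef]
          rw [if_neg harg]
          show c ω = c (Fin.snoc (fun i => ω i.castSucc) true)
          apply congrArg c
          rw [← h]; exact hsn.symm
    have lemA : concatCube (topC a) (topC a') ∈ S.cubes (k+1) := by
      apply hglue k (topC a) (botC a) (topC a') (topC_mem hmor ha) (botC_mem hmor ha)
        (topC_mem hmor ha')
      · exact concat_swap_mem hmor ha_concat
      · rw [hca']; exact ha'
    have hconcat_cT : concatCube (topC c) c'T ∈ S.cubes (k+1) := by
      have := hTc 1 (fun m h1 h2 => by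
        have hm1 : m = 1 := by omega
        subst hm1
        exact lemA)
      exact this
    have hc'mem : concatCube (botC c) c'T ∈ S.cubes (k+1) := by
      apply hglue k (botC c) (topC c) c'T (botC_mem hmor hc) (topC_mem hmor hc) hc'T
      · rw [concat_botC_topC c]; exact hc
      · exact hconcat_cT
    refine ⟨by rw [hID]; exact hc'mem, ?_⟩
    intro n htower
    have hQ : ∀ m, 1 ≤ m → m ≤ n+1 → TN m (topC a) (topC a') ∈ S.cubes (k+m) := by
      intro m
      induction m with
      | zero => intro h; exact absurd h (by omega)
      | succ m ihm =>
        intro _ hm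
        rcases Nat.eq_zero_or_pos m with rfl | hmpos
        · exact lemA
        · have h1 : TN m (topC a) (topC a') ∈ S.cubes (k+m) := ihm hmpos (by omega)
          show concatCube (degN m (topC a)) (TN m (topC a) (topC a')) ∈ S.cubes (k+m+1)
          apply hglue (k+m) _ (degN m (botC a)) _
            (degN_mem hmor (topC_mem hmor ha) m) (degN_mem hmor (botC_mem hmor ha) m) h1
          · exact concat_degN_mem hmor (concat_swap_mem hmor ha_concat) m
          · apply T3 hmor (botC a) (topC a) (topC a') m
            have h3 : TN m (concatCube (botC a) (topC a)) (concatCube (botC a) (topC a'))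
                ∈ S.cubes (k+1+m) := by
              rw [concat_botC_topC a, hca']
              exact htower m hmpos (by omega)
            exact h3
    have hCT : ∀ m, m ≤ n+1 → TN m (topC c) c'T ∈ S.cubes (k+m) := by
      intro m hm
      rcases Nat.eq_zero_or_pos m with rfl | hpos
      · exact hc'T
      · exact hTc m (fun m' h1 h2 => hQ m' h1 (le_trans h2 hm))
    rw [hID]
    have hx : concatCube (degN n (botC c)) (TN n (topC c) c'T) ∈ S.cubes (k+n+1) := by
      apply hglue (k+n) _ (degN n (topC c)) _
        (degN_mem hmor (botC_mem hmor hc) n) (degN_mem hmor (topC_mem hmor hc) n)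
        (hCT n (by omega))
      · exact concat_degN_mem hmor (by rw [concat_botC_topC c]; exact hc) n
      · exact hCT (n+1) (le_refl _)
    have h4 := T4 hmor (botC c) (topC c) c'T n hx
    rw [concat_botC_topC c] at h4
    exact h4

end NilAux

namespace NilAux

variable {X : Type*} {S : CubeFamily X}

/-- Replacement of the top vertex of a `k`-cube (`k ≤ s+1`) by a canonically related point. -/
lemma replace_top (hmor : Mor S) (hglue : IsGluing S) {s k : ℕ} (hk : k ≤ s + 1)
    {c : (Fin k → Bool) → X} (hc : c ∈ S.cubes k) {x' : X}
    (hrel : CanonRel S s (c (topVtx k)) x') :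
    (fun ω => if ω = topVtx k then x' else c ω) ∈ S.cubes k := by
  obtain ⟨q, hq, q', hq', hagr, hqt, hq't⟩ := hrel
  set pad : (Fin k → Bool) → (Fin (s+1) → Bool) :=
    fun ω j => if h : (j : ℕ) < k then ω ⟨j, h⟩ else true with hpad
  have hpadmem : ∀ {u : (Fin (s+1) → Bool) → X}, u ∈ S.cubes (s+1) →
      (fun ω => u (pad ω)) ∈ S.cubes k := by
    intro u hu
    apply mem_of_eq_amap hmor (fun j : Fin (s+1) =>
      if h : (j : ℕ) < k then Sum.inl ((⟨j, h⟩ : Fin k), true) else Sum.inr true) hu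
    intro ω
    apply congrArg u
    funext j
    simp only [amap, hpad]
    split_ifs <;> rfl
  have hpadtop : pad (topVtx k) = topVtx (s+1) := by
    funext j; simp only [hpad, topVtx]; split_ifs <;> rfl
  have hpadne : ∀ ω : Fin k → Bool, ω ≠ topVtx k → pad ω ≠ topVtx (s+1) := by
    intro ω hω hcon
    apply hω
    funext i
    have := congrFun hcon ⟨(i : ℕ), by omega⟩
    simp only [hpad, topVtx] at this ⊢
    rw [dif_pos i.isLt] at this
    simpa using this
  have hr : (fun ω => q (pad ω)) ∈ S.cubes k := hpadmem hq
  have hr' : (fun ω => q' (pad ω)) ∈ S.cubes k := hpadmem hq'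
  have hragr : ∀ ω, ω ≠ topVtx k → q (pad ω) = q' (pad ω) :=
    fun ω hω => hagr _ (hpadne ω hω)
  have hrtop : q (pad (topVtx k)) = c (topVtx k) := by rw [hpadtop, hqt]
  have := (claimB hmor hglue k c (fun ω => q (pad ω)) (fun ω => q' (pad ω))
    hc hr hr' hragr hrtop).1
  have hx' : q' (pad (topVtx k)) = x' := by rw [hpadtop, hq't]
  rwa [hx'] at this

/-- Replacement of an arbitrary vertex. -/
lemma replace_vertex (hmor : Mor S) (hglue : IsGluing S) {s k : ℕ} (hk : k ≤ s + 1)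
    {c : (Fin k → Bool) → X} (hc : c ∈ S.cubes k) (ω₀ : Fin k → Bool) {x' : X}
    (hrel : CanonRel S s (c ω₀) x') :
    (fun ω => if ω = ω₀ then x' else c ω) ∈ S.cubes k := by
  set sw : (Fin k → Bool) → (Fin k → Bool) := fun ω i => if ω₀ i then ω i else !(ω i) with hsw
  have hswsw : ∀ ω, sw (sw ω) = ω := by
    intro ω; funext i; simp only [hsw]; cases h : ω₀ i <;> simp
  have hswtop : sw (topVtx k) = ω₀ := by
    funext i; simp only [hsw, topVtx]; cases h : ω₀ i <;> simp [h]
  have hswω₀ : sw ω₀ = topVtx k := by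
    funext i; simp only [hsw, topVtx]; cases h : ω₀ i <;> simp [h]
  have hswinj : ∀ ω ω', sw ω = sw ω' → ω = ω' := by
    intro ω ω' h
    rw [← hswsw ω, ← hswsw ω', h]
  have hswmem : ∀ {u : (Fin k → Bool) → X}, u ∈ S.cubes k →
      (fun ω => u (sw ω)) ∈ S.cubes k := by
    intro u hu
    apply mem_of_eq_amap hmor (fun i : Fin k => Sum.inl (i, ω₀ i)) hu
    intro ω
    apply congrArg u
    funext i
    simp only [amap, hsw]
  have hcs : (fun ω => c (sw ω)) ∈ S.cubes k := hswmem hc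
  have he : (fun ω => if ω = topVtx k then x' else c (sw ω)) ∈ S.cubes k := by
    apply replace_top hmor hglue hk hcs
    show CanonRel S s (c (sw (topVtx k))) x'
    rw [hswtop]; exact hrel
  have htarget : (fun ω => if ω = ω₀ then x' else c ω)
      = (fun ω => (fun η => if η = topVtx k then x' else c (sw η)) (sw ω)) := by
    funext ω
    show (if ω = ω₀ then x' else c ω) = (if sw ω = topVtx k then x' else c (sw (sw ω)))
    rw [hswsw]
    by_cases h : ω = ω₀
    · rw [if_pos h, if_pos (by rw [h]; exact hswω₀)]
    · rw [if_neg h, if_neg (fun hcon => h (hswinj ω ω₀ (hcon.trans hswω₀.symm)))]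
  rw [htarget]
  exact hswmem he

/-- `CanonRel` is an equivalence relation (given gluing). -/
lemma canonRel_equiv (hmor : Mor S) (h0 : S.cubes 0 = Set.univ) (hglue : IsGluing S)
    (s : ℕ) : Equivalence (CanonRel S s) := by
  constructor
  · intro x
    exact ⟨fun _ => x, const_mem hmor h0 _ x, fun _ => x, const_mem hmor h0 _ x,
      fun _ _ => rfl, rfl, rfl⟩
  · rintro x y ⟨c, hc, c', hc', hagr, hx, hy⟩
    exact ⟨c', hc', c, hc, fun ω h => (hagr ω h).symm, hy, hx⟩
  · rintro x y z ⟨c, hc, c', hc', hagr, hx, hy⟩ ⟨d, hd, d', hd', hagr', hy', hz⟩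
    have hrel : CanonRel S s (d (topVtx (s+1))) x := by
      rw [hy']
      exact ⟨c', hc', c, hc, fun ω h => (hagr ω h).symm, hy, hx⟩
    have he : (fun ω => if ω = topVtx (s+1) then x else d ω) ∈ S.cubes (s+1) :=
      replace_top hmor hglue (le_refl _) hd hrel
    refine ⟨_, he, d', hd', ?_, ?_, hz⟩
    · intro ω h
      rw [if_neg h]
      exact hagr' ω h
    · rw [if_pos rfl]

/-- For an equivalence relation, equality in the `Quot` coincides with the relation. -/
lemma quot_mk_eq_iff {α : Type*} {r : α → α → Prop} (hE : Equivalence r) (a b : α) :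
    Quot.mk r a = Quot.mk r b ↔ r a b := by
  constructor
  · intro h
    have h2 : (Quot.lift (r a) (fun x y hxy => propext
        ⟨fun h' => hE.trans h' hxy, fun h' => hE.trans h' (hE.symm hxy)⟩) (Quot.mk r a))
        = (Quot.lift (r a) (fun x y hxy => propext
        ⟨fun h' => hE.trans h' hxy, fun h' => hE.trans h' (hE.symm hxy)⟩) (Quot.mk r b)) :=
      congrArg _ h
    simp only [Quot.lift_mk] at h2
    rw [← h2]
    exact hE.refl a
  · exact Quot.sound

/-- Pointwise replacement of a cube by canonically related values, `k ≤ s+1`. -/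
lemma pointwise_replace (hmor : Mor S) (h0 : S.cubes 0 = Set.univ) (hglue : IsGluing S)
    {s k : ℕ} (hk : k ≤ s + 1)
    {c c' : (Fin k → Bool) → X} (hc : c ∈ S.cubes k)
    (h : ∀ ω, CanonRel S s (c ω) (c' ω)) : c' ∈ S.cubes k := by
  classical
  have main : ∀ t : Finset (Fin k → Bool), ∀ c : (Fin k → Bool) → X, c ∈ S.cubes k →
      (∀ ω, CanonRel S s (c ω) (c' ω)) → (∀ ω ∉ t, c ω = c' ω) → c' ∈ S.cubes k := by
    intro t
    induction t using Finset.induction with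
    | empty =>
      intro c hcmem hrel hout
      have : c = c' := funext fun ω => hout ω (Finset.notMem_empty ω)
      rwa [← this]
    | @insert ω₀ t hω₀ ih =>
      intro c hcmem hrel hout
      have hmid : (fun ω => if ω = ω₀ then c' ω₀ else c ω) ∈ S.cubes k :=
        replace_vertex hmor hglue hk hcmem ω₀ (hrel ω₀)
      apply ih _ hmid
      · intro ω
        by_cases hω : ω = ω₀
        · subst hω; rw [if_pos rfl]
          exact (canonRel_equiv hmor h0 hglue s).refl _
        · rw [if_neg hω]; exact hrel ω
      · intro ω hω
        by_cases hω' : ω = ω₀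
        · subst hω'; rw [if_pos rfl]
        · rw [if_neg hω']
          exact hout ω (by simp [hω, hω'])
  exact main Finset.univ c hc h (fun ω hω => absurd (Finset.mem_univ ω) hω)

end NilAux

namespace NilAux

variable {X : Type*} {S : CubeFamily X} {s : ℕ}

/-- Quotient cube families are closed under `amap` reindexings. -/
lemma quot_mem_amap (hmor : Mor S) {k l : ℕ} (σ : Fin l → (Fin k × Bool) ⊕ Bool)
    {d : (Fin l → Bool) → Quot (CanonRel S s)} (hd : d ∈ (quotFamilyAbs S s).cubes l) :
    (fun ω => d (amap σ ω)) ∈ (quotFamilyAbs S s).cubes k := by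
  obtain ⟨c, hc, rfl⟩ := hd
  exact ⟨fun ω => c (amap σ ω), hmor (amap σ) (amap_morphism σ) c hc, rfl⟩

lemma quot_topC_mem (hmor : Mor S) {k : ℕ}
    {d : (Fin (k+1) → Bool) → Quot (CanonRel S s)}
    (hd : d ∈ (quotFamilyAbs S s).cubes (k+1)) :
    topC d ∈ (quotFamilyAbs S s).cubes k := by
  have := quot_mem_amap hmor
    (Fin.lastCases (Sum.inr true) (fun i => Sum.inl (i, true))) hd
  have heq : topC d = (fun ω => d (amap
      (Fin.lastCases (Sum.inr true) (fun i => Sum.inl (i, true))) ω)) :=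
    funext fun ω => by rw [topC, ← face_eq_amap true ω]
  rwa [heq]

/-- The quotient has `(s+1)`-uniqueness. -/
lemma quot_unique_succ (hmor : Mor S) (h0 : S.cubes 0 = Set.univ) (hglue : IsGluing S) :
    HasUnique (quotFamilyAbs S s) (s + 1) := by
  intro d hd d' hd' hagr
  obtain ⟨c, hc, rfl⟩ := hd
  obtain ⟨c', hc', rfl⟩ := hd'
  have hE := canonRel_equiv (S := S) hmor h0 hglue s
  have hrelpt : ∀ ω, ω ≠ topVtx (s+1) → CanonRel S s (c ω) (c' ω) := by
    intro ω hω
    exact (quot_mk_eq_iff hE _ _).mp (hagr ω hω)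
  set e : (Fin (s+1) → Bool) → X :=
    fun ω => if ω = topVtx (s+1) then c' (topVtx (s+1)) else c ω with he_def
  have he : e ∈ S.cubes (s+1) := by
    apply pointwise_replace hmor h0 hglue (le_refl (s+1)) hc'
    intro ω
    by_cases hω : ω = topVtx (s+1)
    · simp only [he_def]
      rw [if_pos hω, hω]
      exact hE.refl _
    · simp only [he_def]
      rw [if_neg hω]
      exact hE.symm (hrelpt ω hω)
  have hkey : CanonRel S s (c (topVtx (s+1))) (c' (topVtx (s+1))) := by
    refine ⟨c, hc, e, he, ?_, rfl, ?_⟩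
    · intro ω hω
      simp only [he_def]
      rw [if_neg hω]
    · simp only [he_def]
      simp
  funext ω
  by_cases hω : ω = topVtx (s+1)
  · subst hω
    exact Quot.sound hkey
  · exact hagr ω hω

/-- Uniqueness propagates upwards. -/
lemma quot_unique_ge (hmor : Mor S) (h0 : S.cubes 0 = Set.univ) (hglue : IsGluing S)
    (m : ℕ) (hm : s + 1 ≤ m) : HasUnique (quotFamilyAbs S s) m := by
  obtain ⟨j, rfl⟩ : ∃ j, m = (s+1) + j := ⟨m - (s+1), by omega⟩
  clear hm
  induction j with
  | zero => exact quot_unique_succ hmor h0 hglue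
  | succ j ih =>
    intro d hd d' hd' hagr
    have htop : topC d = topC d' := by
      apply ih _ (quot_topC_mem hmor hd) _ (quot_topC_mem hmor hd')
      intro ω hω
      exact hagr _ (fun hcon => hω ((snoc_true_top_iff ω).mp hcon))
    funext ω
    by_cases hω : ω = topVtx (s+1+j+1)
    · subst hω
      have h1 : d (topVtx (s+1+j+1)) = topC d (topVtx (s+1+j)) :=
        (congrArg d (snoc_top (s+1+j))).symm
      have h2 : d' (topVtx (s+1+j+1)) = topC d' (topVtx (s+1+j)) :=
        (congrArg d' (snoc_top (s+1+j))).symm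
      rw [h1, h2, htop]
    · exact hagr ω hω

/-- Relative completion of the quotient map at every dimension. -/
lemma rel_complete (hmor : Mor S) (h0 : S.cubes 0 = Set.univ) (hglue : IsGluing S)
    (hfib : IsFibrant S) (m : ℕ) (lam : (Fin m → Bool) → X)
    (d : (Fin m → Bool) → Quot (CanonRel S s)) (hcorner : IsCubeCorner S lam)
    (hd : d ∈ (quotFamilyAbs S s).cubes m)
    (hcompat : ∀ η, η ≠ topVtx m → Quot.mk (CanonRel S s) (lam η) = d η) :
    ∃ c₀ ∈ S.cubes m, (∀ η, η ≠ topVtx m → c₀ η = lam η) ∧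
      (fun η => Quot.mk (CanonRel S s) (c₀ η)) = d := by
  have hE := canonRel_equiv (S := S) hmor h0 hglue s
  by_cases hm : m ≤ s + 1
  · -- replacement case
    obtain ⟨e, he, rfl⟩ := hd
    refine ⟨fun η => if η = topVtx m then e (topVtx m) else lam η, ?_, ?_, ?_⟩
    · apply pointwise_replace hmor h0 hglue hm he
      intro η
      show CanonRel S s (e η) (if η = topVtx m then e (topVtx m) else lam η)
      by_cases hη : η = topVtx m
      · rw [if_pos hη, hη]; exact hE.refl _
      · rw [if_neg hη]
        exact hE.symm ((quot_mk_eq_iff hE _ _).mp (hcompat η hη))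
    · intro η hη
      show (if η = topVtx m then e (topVtx m) else lam η) = lam η
      rw [if_neg hη]
    · funext η
      show Quot.mk (CanonRel S s) (if η = topVtx m then e (topVtx m) else lam η)
        = Quot.mk (CanonRel S s) (e η)
      by_cases hη : η = topVtx m
      · rw [if_pos hη, hη]
      · rw [if_neg hη]
        exact hcompat η hη
  · -- completion + uniqueness case
    obtain ⟨c₀, hc₀, hc₀agr⟩ := hfib m lam hcorner
    refine ⟨c₀, hc₀, hc₀agr, ?_⟩
    apply quot_unique_ge hmor h0 hglue m (by omega) _ ⟨c₀, hc₀, rfl⟩ _ hd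
    intro η hη
    rw [hc₀agr η hη]
    exact hcompat η hη
end NilAux

namespace NilAux

variable {X : Type*} {S : CubeFamily X} {s : ℕ}

/-- Weight of a mask. -/
def wt {k : ℕ} (g : Fin k → Bool) : ℕ := (Finset.univ.filter (fun i => g i = true)).card

/-- Pointwise conjunction of masks. -/
def minf {k : ℕ} (ω g : Fin k → Bool) : Fin k → Bool := fun i => ω i && g i

lemma minf_self {k : ℕ} (g : Fin k → Bool) : minf g g = g := by
  funext i; simp [minf]

lemma minf_minf {k : ℕ} (ω g : Fin k → Bool) : minf (minf ω g) g = minf ω g := by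
  funext i; simp only [minf]; cases ω i <;> cases g i <;> simp

lemma wt_le_of_le {k : ℕ} {v g : Fin k → Bool} (h : minf v g = v) : wt v ≤ wt g := by
  apply Finset.card_le_card
  intro i hi
  simp only [Finset.mem_filter, Finset.mem_univ, true_and] at hi ⊢
  have h2 := congrFun h i
  simp only [minf, hi, Bool.true_and] at h2
  exact h2

lemma wt_lt_of_lt {k : ℕ} {v g : Fin k → Bool} (h : minf v g = v) (hne : v ≠ g) :
    wt v < wt g := by
  apply Finset.card_lt_card
  constructor
  · intro i hi
    simp only [Finset.mem_filter, Finset.mem_univ, true_and] at hi ⊢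
    have h2 := congrFun h i
    simp only [minf, hi, Bool.true_and] at h2
    exact h2
  · intro hsub
    apply hne
    funext i
    have h1 := congrFun h i
    simp only [minf] at h1
    rcases hv : v i with _ | _ <;> rcases hg : g i with _ | _
    · rfl
    · have hmem : i ∈ Finset.univ.filter (fun i => g i = true) := by simp [hg]
      have h3 := hsub hmem
      simp only [Finset.mem_filter, Finset.mem_univ, true_and] at h3
      rw [hv] at h3; exact h3
    · rw [hv, hg] at h1; simp at h1
    · rfl

lemma ne_top_of_lt {k : ℕ} {v g : Fin k → Bool} (h : minf v g = v) (hg : g ≠ topVtx k) :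
    v ≠ topVtx k := by
  rintro rfl
  apply hg
  funext i
  have h2 := congrFun h i
  simp only [minf, topVtx, Bool.true_and] at h2 ⊢
  exact h2

/-- Masked completion: complete the "virtual vertex" at mask `g` over the quotient. -/
lemma masked_complete (hmor : Mor S) (h0 : S.cubes 0 = Set.univ) (hglue : IsGluing S)
    (hfib : IsFibrant S) {k : ℕ} (g : Fin k → Bool) (lam : (Fin k → Bool) → X)
    (d : (Fin k → Bool) → Quot (CanonRel S s))
    (hcorner : ∀ j : Fin k, g j = true →
      (fun ω => lam (minf ω (Function.update g j false))) ∈ S.cubes k)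
    (hd : d ∈ (quotFamilyAbs S s).cubes k)
    (hdeg : ∀ ω, d (minf ω g) = d ω)
    (hcompat : ∀ v, minf v g = v → v ≠ g → Quot.mk (CanonRel S s) (lam v) = d v) :
    ∃ x : X, (fun ω => if minf ω g = g then x else lam (minf ω g)) ∈ S.cubes k ∧
      ∀ ω, Quot.mk (CanonRel S s) (if minf ω g = g then x else lam (minf ω g)) = d ω := by
  classical
  set t : Finset (Fin k) := Finset.univ.filter (fun i => g i = true) with ht
  have hmem : ∀ i, i ∈ t ↔ g i = true := by intro i; simp [ht]
  set eo := t.orderIsoOfFin (rfl : t.card = wt g) with heo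
  set E : Fin (wt g) → Fin k := fun p => (eo p : Fin k) with hE
  have hgE : ∀ p, g (E p) = true := fun p => (hmem _).mp (eo p).2
  set ι : (Fin (wt g) → Bool) → (Fin k → Bool) :=
    fun η i => if h : g i = true then η (eo.symm ⟨i, (hmem i).mpr h⟩) else false with hι
  set prj : (Fin k → Bool) → (Fin (wt g) → Bool) := fun ω p => ω (E p) with hprj
  have hEsymm : ∀ (i : Fin k) (h : g i = true), E (eo.symm ⟨i, (hmem i).mpr h⟩) = i :=
    fun i h => congrArg Subtype.val (eo.apply_symm_apply _)
  have hsymmE : ∀ p (h : g (E p) = true), eo.symm ⟨E p, (hmem _).mpr h⟩ = p := by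
    intro p h
    have h1 : (⟨E p, (hmem _).mpr h⟩ : {x // x ∈ t}) = eo p := Subtype.ext rfl
    rw [h1]
    exact eo.symm_apply_apply p
  have P1 : ∀ η, prj (ι η) = η := by
    intro η
    funext p
    show ι η (E p) = η p
    simp only [hι]
    rw [dif_pos (hgE p), hsymmE p (hgE p)]
  have P2 : ∀ ω, ι (prj ω) = minf ω g := by
    intro ω
    funext i
    simp only [hι, minf]
    by_cases h : g i = true
    · have hand : ∀ b : Bool, (b && g i) = b := fun b => by rw [h, Bool.and_true]
      rw [dif_pos h, hand]
      show ω (E _) = ω i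
      rw [hEsymm i h]
    · rw [dif_neg h]
      have hgi : g i = false := by revert h; cases g i <;> simp
      rw [hgi, Bool.and_false]
  have P3 : ι (topVtx (wt g)) = g := by
    funext i
    simp only [hι, topVtx]
    by_cases h : g i = true
    · rw [dif_pos h, h]
    · rw [dif_neg h]
      revert h; cases g i <;> simp
  have hprojg : prj g = topVtx (wt g) := funext fun p => hgE p
  have P4 : ∀ η, ι η = g → η = topVtx (wt g) := by
    intro η h
    rw [← P1 η, h, hprojg]
  have P5 : ∀ η, minf (ι η) g = ι η := by
    intro η
    funext i
    simp only [minf, hι]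
    by_cases h : g i = true
    · have hand : ∀ b : Bool, (b && g i) = b := fun b => by rw [h, Bool.and_true]
      rw [dif_pos h, hand]
    · rw [dif_neg h, Bool.false_and]
  set σι : Fin k → (Fin (wt g) × Bool) ⊕ Bool :=
    fun i => if h : g i = true then Sum.inl ((eo.symm ⟨i, (hmem i).mpr h⟩ : Fin (wt g)), true)
      else Sum.inr false with hσι
  have hι_amap : ∀ η, amap σι η = ι η := by
    intro η
    funext i
    simp only [amap, hσι, hι]
    by_cases h : g i = true
    · rw [dif_pos h, dif_pos h]
      try simp
    · rw [dif_neg h, dif_neg h]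
      try simp
  have hcornerμ : IsCubeCorner S (fun η => lam (ι η)) := by
    intro p
    have hup : ∀ η, ι (Function.update η p false)
        = minf (ι η) (Function.update g (E p) false) := by
      intro η
      funext i
      simp only [hι, minf]
      by_cases h : g i = true
      · rw [dif_pos h, dif_pos h]
        by_cases hip : i = E p
        · subst hip
          have h2 : eo.symm ⟨E p, (hmem _).mpr h⟩ = p := hsymmE p h
          rw [h2, Function.update_self, Function.update_self, Bool.and_false]
        · have hne : eo.symm ⟨i, (hmem i).mpr h⟩ ≠ p := by
            intro hcon
            apply hip
            rw [← hEsymm i h, hcon]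
          have hand : ∀ b : Bool, (b && g i) = b := fun b => by rw [h, Bool.and_true]
          rw [Function.update_of_ne hip, hand]
          exact Function.update_of_ne hne _ _
      · rw [dif_neg h, dif_neg h, Bool.false_and]
    apply mem_of_eq_amap hmor σι (hcorner (E p) (hgE p))
    intro η
    show lam (ι (Function.update η p false))
      = lam (minf (amap σι η) (Function.update g (E p) false))
    rw [hι_amap η, ← hup η]
  have hdι : (fun η => d (ι η)) ∈ (quotFamilyAbs S s).cubes (wt g) := by
    have h1 := quot_mem_amap hmor σι hd
    have heq : (fun η => d (amap σι η)) = fun η => d (ι η) :=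
      funext fun η => congrArg d (hι_amap η)
    rwa [heq] at h1
  obtain ⟨c₀, hc₀, hc₀agr, hc₀π⟩ := rel_complete hmor h0 hglue hfib (wt g)
    (fun η => lam (ι η)) (fun η => d (ι η)) hcornerμ hdι (by
      intro η hη
      show Quot.mk _ (lam (ι η)) = d (ι η)
      exact hcompat (ι η) (P5 η) (fun hcon => hη (P4 η hcon)))
  set σp : Fin (wt g) → (Fin k × Bool) ⊕ Bool := fun p => Sum.inl (E p, true) with hσp
  have hproj_amap : ∀ ω, amap σp ω = prj ω := by
    intro ω; funext p; simp [amap, hσp, hprj]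
  refine ⟨c₀ (topVtx (wt g)), ?_, ?_⟩
  · have htarget : (fun ω => if minf ω g = g then c₀ (topVtx (wt g)) else lam (minf ω g))
        = fun ω => c₀ (prj ω) := by
      funext ω
      show (if minf ω g = g then c₀ (topVtx (wt g)) else lam (minf ω g)) = c₀ (prj ω)
      by_cases hc : minf ω g = g
      · rw [if_pos hc]
        have hptop : prj ω = topVtx (wt g) := P4 (prj ω) (by rw [P2 ω]; exact hc)
        rw [hptop]
      · rw [if_neg hc]
        have hne : prj ω ≠ topVtx (wt g) := by
          intro hcon
          apply hc
          rw [← P2 ω, hcon, P3]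
        rw [hc₀agr (prj ω) hne]
        show lam (minf ω g) = lam (ι (prj ω))
        rw [P2 ω]
    rw [htarget]
    exact mem_of_eq_amap hmor σp hc₀ (fun ω => congrArg c₀ (hproj_amap ω).symm)
  · intro ω
    have h1 : Quot.mk (CanonRel S s) (c₀ (prj ω)) = d (ι (prj ω)) := congrFun hc₀π (prj ω)
    by_cases hc : minf ω g = g
    · rw [if_pos hc]
      have hptop : prj ω = topVtx (wt g) := P4 (prj ω) (by rw [P2 ω]; exact hc)
      calc Quot.mk (CanonRel S s) (c₀ (topVtx (wt g)))
          = Quot.mk (CanonRel S s) (c₀ (prj ω)) := by rw [hptop]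
        _ = d (ι (prj ω)) := h1
        _ = d (minf ω g) := by rw [P2 ω]
        _ = d ω := hdeg ω
    · rw [if_neg hc]
      have hne : prj ω ≠ topVtx (wt g) := by
        intro hcon
        apply hc
        rw [← P2 ω, hcon, P3]
      calc Quot.mk (CanonRel S s) (lam (minf ω g))
          = Quot.mk (CanonRel S s) (lam (ι (prj ω))) := by rw [P2 ω]
        _ = Quot.mk (CanonRel S s) (c₀ (prj ω)) := by rw [hc₀agr (prj ω) hne]
        _ = d (ι (prj ω)) := h1
        _ = d ω := by rw [P2 ω, hdeg ω]

end NilAux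

namespace NilAux

variable {X : Type*} {S : CubeFamily X} {s : ℕ}

lemma wt_le_dim {k : ℕ} (g : Fin k → Bool) : wt g ≤ k := by
  have h1 : (Finset.univ.filter (fun i => g i = true)).card ≤ (Finset.univ : Finset (Fin k)).card :=
    Finset.card_filter_le _ _
  exact h1.trans (le_of_eq (by simp))

/-- Corner lifting: every corner in the quotient lifts to a corner in `X`. -/
lemma corner_lift (hmor : Mor S) (h0 : S.cubes 0 = Set.univ) (hglue : IsGluing S)
    (hfib : IsFibrant S) {k : ℕ} (lam' : (Fin k → Bool) → Quot (CanonRel S s))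
    (hcorner' : IsCubeCorner (quotFamilyAbs S s) lam') :
    ∃ lam : (Fin k → Bool) → X, IsCubeCorner S lam ∧
      ∀ ω, ω ≠ topVtx k → Quot.mk (CanonRel S s) (lam ω) = lam' ω := by
  classical
  -- masked faces of the corner are quotient cubes
  have hd_g : ∀ g : Fin k → Bool, g ≠ topVtx k →
      (fun ω => lam' (minf ω g)) ∈ (quotFamilyAbs S s).cubes k := by
    intro g hg
    obtain ⟨j, hj⟩ : ∃ j, g j = false := by
      by_contra hcon
      push_neg at hcon
      apply hg
      funext i
      rcases h : g i with _ | _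
      · exact absurd h (hcon i)
      · rfl
    have hface := hcorner' j
    set σm : Fin k → (Fin k × Bool) ⊕ Bool :=
      fun i => if g i = true then Sum.inl (i, true) else Sum.inr false with hσm
    have h1 := quot_mem_amap hmor σm hface
    have heq : (fun ω => lam' (minf ω g))
        = (fun ω => (fun ω' => lam' (Function.update ω' j false)) (amap σm ω)) := by
      funext ω
      show lam' (minf ω g) = lam' (Function.update (amap σm ω) j false)
      apply congrArg lam'
      funext i
      rw [Function.update_apply]
      simp only [minf]
      by_cases hij : i = j
      · rw [if_pos hij, hij, hj, Bool.and_false]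
      · rw [if_neg hij]
        simp only [amap, hσm]
        rcases h : g i with _ | _
        · simp [h]
        · simp [h]
    rwa [heq]
  -- main induction on the weight
  have main : ∀ m : ℕ, ∃ lam : (Fin k → Bool) → X,
      ∀ g, g ≠ topVtx k → wt g ≤ m →
        ((fun ω => lam (minf ω g)) ∈ S.cubes k ∧
         ∀ ω, Quot.mk (CanonRel S s) (lam (minf ω g)) = lam' (minf ω g)) := by
    intro m
    induction m with
    | zero =>
      refine ⟨fun ω => (lam' ω).out, ?_⟩
      intro g hg hwt
      have hg0 : ∀ i, g i = false := by
        intro i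
        by_contra hcon
        have hgi : g i = true := by revert hcon; cases g i <;> simp
        have : i ∈ Finset.univ.filter (fun i => g i = true) := by simp [hgi]
        have h2 : 0 < wt g := Finset.card_pos.mpr ⟨i, this⟩
        omega
      have hminf : ∀ ω, minf ω g = g := by
        intro ω; funext i; simp only [minf]; rw [hg0 i, Bool.and_false]
      constructor
      · have heq : (fun ω => (lam' (minf ω g)).out) = (fun _ => (lam' g).out) := by
          funext ω; rw [hminf ω]
        rw [heq]
        exact const_mem hmor h0 k _
      · intro ω
        exact Quot.out_eq _
    | succ m ih =>
      obtain ⟨lam, hInv⟩ := ih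
      have hmc : ∀ g : Fin k → Bool, g ≠ topVtx k → wt g = m+1 →
          ∃ x, ((fun ω => if minf ω g = g then x else lam (minf ω g)) ∈ S.cubes k ∧
            ∀ ω, Quot.mk (CanonRel S s) (if minf ω g = g then x else lam (minf ω g))
              = lam' (minf ω g)) := by
        intro g hg hwt
        have hres := masked_complete hmor h0 hglue hfib g lam (fun ω => lam' (minf ω g))
          (by
            intro j hj
            set g' := Function.update g j false with hg'
            have hle : minf g' g = g' := by
              funext i
              simp only [minf, hg']
              by_cases hij : i = j
              · subst hij; rw [Function.update_self, Bool.false_and]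
              · rw [Function.update_of_ne hij]
                cases g i <;> rfl
            have hne : g' ≠ g := by
              intro hcon
              have := congrFun hcon j
              simp only [hg', Function.update_self] at this
              rw [hj] at this
              exact Bool.false_ne_true this
            have hg'top : g' ≠ topVtx k := by
              intro hcon
              have := congrFun hcon j
              simp only [hg', Function.update_self, topVtx] at this
              exact Bool.false_ne_true this
            have hwt' : wt g' ≤ m := by
              have := wt_lt_of_lt hle hne
              omega
            exact (hInv g' hg'top hwt').1)
          (hd_g g hg)
          (by
            intro ω
            show lam' (minf (minf ω g) g) = lam' (minf ω g)
            rw [minf_minf])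
          (by
            intro v hv hvne
            have hvtop : v ≠ topVtx k := ne_top_of_lt hv hg
            have hwtv : wt v ≤ m := by
              have := wt_lt_of_lt hv hvne
              omega
            have h2 := (hInv v hvtop hwtv).2 v
            rw [minf_self] at h2
            show Quot.mk (CanonRel S s) (lam v) = lam' (minf v g)
            rw [hv]
            exact h2)
        exact hres
      refine ⟨fun ω => if h : ω ≠ topVtx k ∧ wt ω = m+1
        then Classical.choose (hmc ω h.1 h.2) else lam ω, ?_⟩
      set lamN : (Fin k → Bool) → X := fun ω => if h : ω ≠ topVtx k ∧ wt ω = m+1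
        then Classical.choose (hmc ω h.1 h.2) else lam ω with hlamN
      have hsmall : ∀ v : Fin k → Bool, wt v ≤ m → lamN v = lam v := by
        intro v hv
        simp only [hlamN]
        rw [dif_neg (fun hcon => by omega)]
      intro g hg hwt
      rcases Nat.lt_succ_iff_lt_or_eq.mp (Nat.lt_succ_of_le hwt) with hlt | heq'
      · -- wt g ≤ m
        have hwtm : wt g ≤ m := by omega
        have heq : (fun ω => lamN (minf ω g)) = (fun ω => lam (minf ω g)) := by
          funext ω
          exact hsmall _ ((wt_le_of_le (minf_minf ω g)).trans hwtm)
        constructor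
        · rw [heq]; exact (hInv g hg hwtm).1
        · intro ω
          rw [show lamN (minf ω g) = lam (minf ω g) from congrFun heq ω]
          exact (hInv g hg hwtm).2 ω
      · -- wt g = m+1
        obtain ⟨h1, h2⟩ := Classical.choose_spec (hmc g hg heq')
        have hgood : (fun ω => lamN (minf ω g))
            = (fun ω => if minf ω g = g then Classical.choose (hmc g hg heq')
                else lam (minf ω g)) := by
          funext ω
          by_cases hvg : minf ω g = g
          · rw [if_pos hvg, hvg]
            show lamN g = _
            simp only [hlamN]
            rw [dif_pos ⟨hg, heq'⟩]
          · rw [if_neg hvg]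
            have hwtv : wt (minf ω g) ≤ m := by
              have := wt_lt_of_lt (minf_minf ω g) hvg
              omega
            exact hsmall _ hwtv
        constructor
        · rw [hgood]; exact h1
        · intro ω
          rw [show lamN (minf ω g) = (if minf ω g = g then Classical.choose (hmc g hg heq')
            else lam (minf ω g)) from congrFun hgood ω]
          exact h2 ω
  obtain ⟨lam, hInv⟩ := main k
  refine ⟨lam, ?_, ?_⟩
  · intro i
    set gi : Fin k → Bool := Function.update (topVtx k) i false with hgi
    have hupd : ∀ ω : Fin k → Bool, Function.update ω i false = minf ω gi := by
      intro ω
      funext i'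
      simp only [minf, hgi]
      by_cases hii : i' = i
      · subst hii
        rw [Function.update_self, Function.update_self, Bool.and_false]
      · rw [Function.update_of_ne hii, Function.update_of_ne hii]
        show ω i' = (ω i' && topVtx k i')
        show ω i' = (ω i' && true)
        rw [Bool.and_true]
    have hgitop : gi ≠ topVtx k := by
      intro hcon
      have := congrFun hcon i
      simp only [hgi, Function.update_self, topVtx] at this
      exact Bool.false_ne_true this
    have heq : (fun ω => lam (Function.update ω i false)) = (fun ω => lam (minf ω gi)) := by
      funext ω; rw [hupd ω]
    rw [heq]
    exact (hInv gi hgitop (wt_le_dim gi)).1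
  · intro ω hω
    have h2 := (hInv ω hω (wt_le_dim ω)).2 ω
    rwa [minf_self] at h2

end NilAux

/-- for a compact gluing cubespace `X` and any `s ≥ 0`, the quotient
`X/∼ₛ` by the `s`-th canonical relation has `(s+1)`-uniqueness; consequently if `X` is
moreover fibrant, then `X/∼ₛ` is an `s`-nilspace (fibrant with `(s+1)`-uniqueness). -/
theorem quotient_has_uniqueness {X : Type*} [MetricSpace X] [CompactSpace X]
    (S : CubeFamily X) (hS : S.IsCubespace) (hglue : IsGluing S) (s : ℕ) :
    HasUnique (quotFamilyAbs S s) (s + 1) ∧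
      (IsFibrant S → IsFibrant (quotFamilyAbs S s)) := by
  have hmor : NilAux.Mor S := by
    intro k l ρ hρ c hc
    exact hS.2.2 ρ hρ c hc
  have h0 : S.cubes 0 = Set.univ := hS.2.1
  constructor
  · exact NilAux.quot_unique_succ hmor h0 hglue
  · intro hfib
    intro k lam' hcorner'
    obtain ⟨lam, hlamcorner, hπ⟩ := NilAux.corner_lift hmor h0 hglue hfib lam' hcorner'
    obtain ⟨c₀, hc₀, hagr⟩ := hfib k lam hlamcorner
    refine ⟨fun ω => Quot.mk (CanonRel S s) (c₀ ω), ⟨c₀, hc₀, rfl⟩, ?_⟩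
    intro ω hω
    show Quot.mk (CanonRel S s) (c₀ ω) = lam' ω
    rw [hagr ω hω]
    exact hπ ω hω
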